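/- arXiv:1409.0260 — 2 statements merged into one kernel-verified Lean document; each statement's English description precedes it below -/
import Mathlib

section
/- Let |φ⟩ be a unit vector, Π a projection with ‖(Id−Π)|φ⟩‖² ≤ δ, and W = Id + Σ_{ℓ=2}^{4} E_ℓ ⊗ W_ℓ a unitary with ‖W_ℓ‖ ≤ 1 such that Π E_ℓ Π = 0 for ℓ = 2,3,4 (where each E_ℓ acts on a factor disjoint from the W_ℓ factors). If |ψ⟩ = W|φ⟩ satisfies ‖(Id−Π)|ψ⟩‖² ≤ δ, then ‖|ψ⟩ − |φ⟩‖² ≤ 3(δ + 9δ + δ) = 33δ. -/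
open ContinuousLinearMap

/-- Key estimate of Claim 1. `P` is the codespace projector (on the code
factor), `W = Id + E₂W₂ + E₃W₃ + E₄W₄` is unitary with `‖Eℓ‖, ‖Wℓ‖ ≤ 1`, the `Eℓ` are
detected errors (`P Eℓ P = 0`), and the `Wℓ` act on a disjoint factor (they commute
with `P` and with the `Eℓ`). If `φ` is a unit vector with `‖(Id−P)φ‖² ≤ δ` and
`ψ = Wφ` satisfies `‖(Id−P)ψ‖² ≤ δ`, then `‖ψ − φ‖² ≤ 33δ`. -/
theorem pauli_error_closeness {H : Type*} [NormedAddCommGroup H]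
    [InnerProductSpace ℂ H] [FiniteDimensional ℂ H]
    (P W E₂ E₃ E₄ W₂ W₃ W₄ : H →L[ℂ] H)
    (hPproj : P ∘L P = P) (hPsa : ContinuousLinearMap.adjoint P = P)
    (hW : W = 1 + E₂ ∘L W₂ + E₃ ∘L W₃ + E₄ ∘L W₄)
    (hWu : ∀ x : H, ‖W x‖ = ‖x‖)
    (hE : ‖E₂‖ ≤ 1 ∧ ‖E₃‖ ≤ 1 ∧ ‖E₄‖ ≤ 1)
    (hWn : ‖W₂‖ ≤ 1 ∧ ‖W₃‖ ≤ 1 ∧ ‖W₄‖ ≤ 1)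
    (hdet : P ∘L E₂ ∘L P = 0 ∧ P ∘L E₃ ∘L P = 0 ∧ P ∘L E₄ ∘L P = 0)
    (hcommP : W₂ ∘L P = P ∘L W₂ ∧ W₃ ∘L P = P ∘L W₃ ∧ W₄ ∘L P = P ∘L W₄)
    (hcommE : W₂ ∘L E₂ = E₂ ∘L W₂ ∧ W₃ ∘L E₃ = E₃ ∘L W₃ ∧ W₄ ∘L E₄ = E₄ ∘L W₄)
    (δ : ℝ) (φ ψ : H) (hφ : ‖φ‖ = 1) (hψ : ψ = W φ)
    (hφP : ‖φ - P φ‖ ^ 2 ≤ δ) (hψP : ‖ψ - P ψ‖ ^ 2 ≤ δ) :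
    ‖ψ - φ‖ ^ 2 ≤ 33 * δ := by

  obtain ⟨hE2, hE3, hE4⟩ := hE
  obtain ⟨hN2, hN3, hN4⟩ := hWn
  obtain ⟨hd2, hd3, hd4⟩ := hdet
  obtain ⟨hc2, hc3, hc4⟩ := hcommP
  set a := ‖φ - P φ‖ with ha
  set b := ‖ψ - P ψ‖ with hb
  have ha0 : 0 ≤ a := norm_nonneg _
  have hb0 : 0 ≤ b := norm_nonneg _
  have hδ0 : 0 ≤ δ := le_trans (sq_nonneg a) hφP
  -- P is a contraction
  have hPnorm : ∀ x : H, ‖P x‖ ≤ ‖x‖ := by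
    intro x
    have hPP : P (P x) = P x := by
      have := ContinuousLinearMap.ext_iff.mp hPproj x
      simpa using this
    have h1 : inner ℂ (P x) (P x) = inner ℂ x (P x) := by
      nth_rewrite 1 [← hPsa]
      rw [ContinuousLinearMap.adjoint_inner_left, hPP]
    have h2 : ‖P x‖ ^ 2 = ‖inner ℂ x (P x)‖ := by
      rw [← h1, inner_self_eq_norm_sq_to_K]
      simp
    have h3 : ‖inner ℂ x (P x)‖ ≤ ‖x‖ * ‖P x‖ := norm_inner_le_norm _ _
    nlinarith [norm_nonneg (P x), norm_nonneg x]
  have bnd : ∀ (A B : H →L[ℂ] H), ‖A‖ ≤ 1 → ‖B‖ ≤ 1 → ∀ y : H, ‖A (B y)‖ ≤ ‖y‖ := by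
    intro A B hA hB y
    calc ‖A (B y)‖ ≤ ‖A‖ * ‖B y‖ := A.le_opNorm _
      _ ≤ 1 * ‖B y‖ := mul_le_mul_of_nonneg_right hA (norm_nonneg _)
      _ = ‖B y‖ := one_mul _
      _ ≤ ‖B‖ * ‖y‖ := B.le_opNorm _
      _ ≤ 1 * ‖y‖ := mul_le_mul_of_nonneg_right hB (norm_nonneg _)
      _ = ‖y‖ := one_mul _
  -- each detected term vanishes on the codespace
  have zero_term : ∀ (E Wl : H →L[ℂ] H), P ∘L E ∘L P = 0 → Wl ∘L P = P ∘L Wl →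
      P (E (Wl (P φ))) = 0 := by
    intro E Wl hd hc
    have h1 : Wl (P φ) = P (Wl φ) := by
      have := ContinuousLinearMap.ext_iff.mp hc φ
      simpa using this
    rw [h1]
    have := ContinuousLinearMap.ext_iff.mp hd (Wl φ)
    simpa using this
  have term_bnd : ∀ (E Wl : H →L[ℂ] H), ‖E‖ ≤ 1 → ‖Wl‖ ≤ 1 →
      P ∘L E ∘L P = 0 → Wl ∘L P = P ∘L Wl → ‖P (E (Wl φ))‖ ≤ a := by
    intro E Wl hEn hWln hd hc
    have e : P (E (Wl φ)) = P (E (Wl (φ - P φ))) := by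
      rw [map_sub Wl, map_sub E, map_sub P, zero_term E Wl hd hc, sub_zero]
    rw [e]
    calc ‖P (E (Wl (φ - P φ)))‖ ≤ ‖E (Wl (φ - P φ))‖ := hPnorm _
      _ ≤ ‖φ - P φ‖ := bnd E Wl hEn hWln _
  have hsum : ψ - φ = E₂ (W₂ φ) + E₃ (W₃ φ) + E₄ (W₄ φ) := by
    rw [hψ, hW]
    simp only [ContinuousLinearMap.add_apply, ContinuousLinearMap.comp_apply,
      ContinuousLinearMap.one_apply]
    abel
  have hPsum : ‖P (ψ - φ)‖ ≤ 3 * a := by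
    rw [hsum, map_add, map_add]
    calc ‖P (E₂ (W₂ φ)) + P (E₃ (W₃ φ)) + P (E₄ (W₄ φ))‖
        ≤ ‖P (E₂ (W₂ φ))‖ + ‖P (E₃ (W₃ φ))‖ + ‖P (E₄ (W₄ φ))‖ := norm_add₃_le
      _ ≤ a + a + a := by
          gcongr
          · exact term_bnd E₂ W₂ hE2 hN2 hd2 hc2
          · exact term_bnd E₃ W₃ hE3 hN3 hd3 hc3
          · exact term_bnd E₄ W₄ hE4 hN4 hd4 hc4
      _ = 3 * a := by ring
  have hdecomp : ψ - φ = (ψ - P ψ) + P (ψ - φ) + (P φ - φ) := by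
    rw [map_sub]
    abel
  have hfinal : ‖ψ - φ‖ ≤ b + 3 * a + a := by
    rw [hdecomp]
    calc ‖(ψ - P ψ) + P (ψ - φ) + (P φ - φ)‖
        ≤ ‖ψ - P ψ‖ + ‖P (ψ - φ)‖ + ‖P φ - φ‖ := norm_add₃_le
      _ ≤ b + 3 * a + a := by
          gcongr
          rw [norm_sub_rev]
  have hsq : ‖ψ - φ‖ ^ 2 ≤ (b + 3 * a + a) ^ 2 := by
    have := pow_le_pow_left₀ (norm_nonneg (ψ - φ)) hfinal 2
    exact this
  nlinarith [sq_nonneg (a - b), hφP, hψP, ha0, hb0, hδ0]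
end

section
/- For the 5-qubit perfect code: the codespace is a 2-dimensional subspace of (C²)^{⊗5} stabilized by the group generated by XZZXI, IXZZX, XIXZZ, ZXIXZ; every nontrivial Pauli operator of weight at most 2 either anticommutes with some stabilizer generator or is detected, and in particular the projector Π onto the codespace satisfies Π E Π = λ_E Π with λ_E = 0 for every weight-1 Pauli error E, so the code detects (indeed corrects) all single-qubit errors. -/
open Matrix

/-- The Pauli X matrix. -/
noncomputable def pX : Matrix (Fin 2) (Fin 2) ℂ := !![0, 1; 1, 0]
/-- The Pauli Y matrix. -/
noncomputable def pY : Matrix (Fin 2) (Fin 2) ℂ := !![0, -Complex.I; Complex.I, 0]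
/-- The Pauli Z matrix. -/
noncomputable def pZ : Matrix (Fin 2) (Fin 2) ℂ := !![1, 0; 0, -1]

/-- Tensor product of five single-qubit operators, as a matrix on `(C²)^{⊗5}`. -/
noncomputable def tp5 (f : Fin 5 → Matrix (Fin 2) (Fin 2) ℂ) :
    Matrix (Fin 5 → Fin 2) (Fin 5 → Fin 2) ℂ :=
  fun x y => ∏ i, f i (x i) (y i)

/-- The four stabilizer generators XZZXI, IXZZX, XIXZZ, ZXIXZ of the 5-qubit code. -/
noncomputable def stabGen : Fin 4 → Matrix (Fin 5 → Fin 2) (Fin 5 → Fin 2) ℂ :=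
  ![tp5 ![pX, pZ, pZ, pX, 1], tp5 ![1, pX, pZ, pZ, pX],
    tp5 ![pX, 1, pX, pZ, pZ], tp5 ![pZ, pX, 1, pX, pZ]]

/-- The element of the stabilizer group indexed by a subset of the generators. -/
noncomputable def stabElem (s : Fin 4 → Bool) : Matrix (Fin 5 → Fin 2) (Fin 5 → Fin 2) ℂ :=
  (if s 0 then stabGen 0 else 1) * (if s 1 then stabGen 1 else 1) *
    (if s 2 then stabGen 2 else 1) * (if s 3 then stabGen 3 else 1)

/-- The projector `Π = (1/16) Σ_{g ∈ stabilizer group} g` onto the codespace. -/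
noncomputable def codeProj : Matrix (Fin 5 → Fin 2) (Fin 5 → Fin 2) ℂ :=
  (1 / 16 : ℂ) • ∑ s : Fin 4 → Bool, stabElem s

noncomputable def pauli : Fin 4 → Matrix (Fin 2) (Fin 2) ℂ := ![1, pX, pY, pZ]

noncomputable def eps (a b : Fin 4) : ℂ := if a = 0 ∨ b = 0 ∨ a = b then 1 else -1

lemma tp5_mul (f g : Fin 5 → Matrix (Fin 2) (Fin 2) ℂ) :
    tp5 f * tp5 g = tp5 (fun i => f i * g i) := by
  ext x y
  simp only [tp5, Matrix.mul_apply, ← Finset.prod_mul_distrib]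
  rw [Finset.prod_univ_sum]
  rfl

lemma tp5_smul_vec (c : Fin 5 → ℂ) (f : Fin 5 → Matrix (Fin 2) (Fin 2) ℂ) :
    tp5 (fun i => c i • f i) = (∏ i, c i) • tp5 f := by
  ext x y
  simp [tp5, Matrix.smul_apply, smul_eq_mul, Finset.prod_mul_distrib]

lemma tp5_one : tp5 (fun _ => 1) = 1 := by
  ext x y
  simp only [tp5, Matrix.one_apply, Finset.prod_boole]
  simp [funext_iff]

lemma pauli_comm (a b : Fin 4) : pauli a * pauli b = eps a b • (pauli b * pauli a) := by
  fin_cases a <;> fin_cases b <;>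
    · simp only [pauli, eps, Matrix.cons_val_zero, Matrix.cons_val_one, Matrix.head_cons,
        Matrix.cons_val_two, Matrix.tail_cons, Matrix.cons_val_three, Fin.ext_iff]
      norm_num [pX, pY, pZ, ← Matrix.ext_iff, Fin.forall_fin_two, Matrix.mul_apply,
        Fin.sum_univ_two, Matrix.smul_apply, Matrix.one_apply, Complex.ext_iff]

lemma pauli_sq (a : Fin 4) : pauli a * pauli a = 1 := by
  fin_cases a <;>
    · simp only [pauli, Matrix.cons_val_zero, Matrix.cons_val_one, Matrix.head_cons,
        Matrix.cons_val_two, Matrix.tail_cons, Matrix.cons_val_three]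
      norm_num [pX, pY, pZ, ← Matrix.ext_iff, Fin.forall_fin_two, Matrix.mul_apply,
        Fin.sum_univ_two, Matrix.one_apply, Complex.ext_iff]

def code : Fin 4 → Fin 5 → Fin 4 :=
  ![![1,3,3,1,0], ![0,1,3,3,1], ![1,0,1,3,3], ![3,1,0,1,3]]

noncomputable def tpP (a : Fin 5 → Fin 4) := tp5 (fun i => pauli (a i))

lemma stabGen_eq (i : Fin 4) : stabGen i = tpP (code i) := by
  fin_cases i <;>
  ·
      exact congrArg tp5 (funext fun j => by fin_cases j <;> rfl)

lemma tpP_mul_comm (a b : Fin 5 → Fin 4) :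
    tpP a * tpP b = (∏ j, eps (a j) (b j)) • (tpP b * tpP a) := by
  rw [tpP, tpP, tp5_mul,
    show (fun i => pauli (a i) * pauli (b i))
        = fun i => eps (a i) (b i) • (pauli (b i) * pauli (a i)) from
      funext fun i => pauli_comm _ _,
    tp5_smul_vec, ← tp5_mul]

lemma tpP_sq (a : Fin 5 → Fin 4) : tpP a * tpP a = 1 := by
  rw [tpP, tp5_mul]
  have : (fun i => pauli (a i) * pauli (a i)) = fun _ => (1 : Matrix (Fin 2) (Fin 2) ℂ) := by
    funext i; exact pauli_sq (a i)
  rw [this, tp5_one]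

lemma eps_prod (a b : Fin 5 → Fin 4) :
    (∏ j, eps (a j) (b j)) =
      (-1 : ℂ) ^ (Finset.univ.filter fun j => ¬(a j = 0 ∨ b j = 0 ∨ a j = b j)).card := by
  simp only [eps]
  rw [Finset.prod_ite]
  simp [Finset.prod_const]

lemma gen_comm (i j : Fin 4) : stabGen i * stabGen j = stabGen j * stabGen i := by
  rw [stabGen_eq, stabGen_eq, tpP_mul_comm, eps_prod]
  have h : Even ((Finset.univ.filter
      fun k => ¬(code i k = 0 ∨ code j k = 0 ∨ code i k = code j k)).card) := by
    fin_cases i <;> fin_cases j <;> decide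
  rw [h.neg_one_pow, one_smul]

noncomputable def P (i : Fin 4) (b : Bool) : Matrix (Fin 5 → Fin 2) (Fin 5 → Fin 2) ℂ :=
  if b then stabGen i else 1

lemma stabElem_def (s : Fin 4 → Bool) :
    stabElem s = P 0 (s 0) * P 1 (s 1) * P 2 (s 2) * P 3 (s 3) := rfl

lemma gen_sq (i : Fin 4) : stabGen i * stabGen i = 1 := by
  rw [stabGen_eq]; exact tpP_sq _

lemma P_comm (i j : Fin 4) (b c : Bool) : Commute (P i b) (P j c) := by
  unfold P
  cases b <;> cases c <;> simp [Commute, SemiconjBy, gen_comm i j]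

lemma P_mul_P (i : Fin 4) (b c : Bool) : P i b * P i c = P i (xor b c) := by
  unfold P
  cases b <;> cases c <;> simp [gen_sq i]

lemma stabElem_mul (s t : Fin 4 → Bool) :
    stabElem s * stabElem t = stabElem (fun i => xor (s i) (t i)) := by
  simp only [stabElem_def]
  rw [← P_mul_P 0 (s 0) (t 0), ← P_mul_P 1 (s 1) (t 1), ← P_mul_P 2 (s 2) (t 2),
    ← P_mul_P 3 (s 3) (t 3)]
  simp only [mul_assoc]
  rw [(P_comm 3 0 (s 3) (t 0)).left_comm, (P_comm 2 0 (s 2) (t 0)).left_comm,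
    (P_comm 1 0 (s 1) (t 0)).left_comm, (P_comm 3 1 (s 3) (t 1)).left_comm,
    (P_comm 2 1 (s 2) (t 1)).left_comm, (P_comm 3 2 (s 3) (t 2)).left_comm]

lemma stabElem_zero : stabElem (fun _ => false) = 1 := by
  simp [stabElem]

lemma stabElem_inv (s : Fin 4 → Bool) : stabElem s * stabElem s = 1 := by
  rw [stabElem_mul]
  simpa using stabElem_zero

lemma tp5_conjT (f : Fin 5 → Matrix (Fin 2) (Fin 2) ℂ) :
    (tp5 f)ᴴ = tp5 (fun i => (f i)ᴴ) := by
  ext x y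
  simp [tp5, Matrix.conjTranspose_apply, map_prod]

lemma pauli_conjT (a : Fin 4) : (pauli a)ᴴ = pauli a := by
  fin_cases a <;>
    · show _ᴴ = _
      ext i j
      fin_cases i <;> fin_cases j <;>
        simp [pauli, pX, pY, pZ, Matrix.conjTranspose_apply, Matrix.one_apply]

lemma stabGen_conjT (i : Fin 4) : (stabGen i)ᴴ = stabGen i := by
  rw [stabGen_eq, tpP, tp5_conjT]
  exact congrArg tp5 (funext fun j => pauli_conjT _)

lemma stabElem_conjT (s : Fin 4 → Bool) : (stabElem s)ᴴ = stabElem s := by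
  have hP : ∀ i b, (P i b)ᴴ = P i b := by
    intro i b; cases b <;> simp [P, stabGen_conjT]
  rw [stabElem_def]
  simp only [Matrix.conjTranspose_mul, hP]
  -- goal : P 3 _ * (P 2 _ * (P 1 _ * P 0 _)) = P 0 _ * P 1 _ * P 2 _ * P 3 _
  rw [(P_comm 1 0 _ _).eq, (P_comm 2 0 _ _).left_comm, (P_comm 2 1 _ _).eq,
    (P_comm 3 0 _ _).left_comm, (P_comm 3 1 _ _).left_comm, (P_comm 3 2 _ _).eq]
  simp [mul_assoc]

def nAnti (g : Fin 4) (e : Fin 5 → Fin 4) : ℕ :=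
  (Finset.univ.filter fun j => ¬(code g j = 0 ∨ e j = 0 ∨ code g j = e j)).card

def sngl (j : Fin 5) (k : Fin 4) : Fin 5 → Fin 4 := fun t => if t = j then k else 0

def dbl (j1 j2 : Fin 5) (k1 k2 : Fin 4) : Fin 5 → Fin 4 :=
  fun t => if t = j1 then k1 else if t = j2 then k2 else 0

set_option maxRecDepth 10000 in
lemma syndrome_decide : ∀ s : Fin 4 → Bool, (∃ i, s i) →
    ∃ j : Fin 5, ∃ k : Fin 4, ¬ Even (∑ i : Fin 4, if s i then nAnti i (sngl j k) else 0) := by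
  decide

set_option maxRecDepth 10000 in
lemma detect_decide : ∀ j1 j2 : Fin 5, ∀ k1 k2 : Fin 4,
    (∃ i, dbl j1 j2 k1 k2 i ≠ 0) → ∃ g : Fin 4, ¬ Even (nAnti g (dbl j1 j2 k1 k2)) := by
  decide

lemma gen_swap (i : Fin 4) (e : Fin 5 → Fin 4) :
    stabGen i * tpP e = ((-1 : ℂ) ^ nAnti i e) • (tpP e * stabGen i) := by
  rw [stabGen_eq, tpP_mul_comm, eps_prod]; rfl

lemma P_swap (i : Fin 4) (b : Bool) (e : Fin 5 → Fin 4) :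
    P i b * tpP e = ((-1 : ℂ) ^ (if b then nAnti i e else 0)) • (tpP e * P i b) := by
  cases b <;> simp [P, gen_swap]

lemma swap_mul {M N A : Matrix (Fin 5 → Fin 2) (Fin 5 → Fin 2) ℂ} {c d : ℂ}
    (hM : M * A = c • (A * M)) (hN : N * A = d • (A * N)) :
    (M * N) * A = (c * d) • (A * (M * N)) := by
  rw [mul_assoc, hN, mul_smul_comm, ← mul_assoc, hM, smul_mul_assoc, smul_smul,
    mul_comm d c, mul_assoc]

lemma stabElem_swap (s : Fin 4 → Bool) (e : Fin 5 → Fin 4) :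
    stabElem s * tpP e =
      ((-1 : ℂ) ^ (∑ i : Fin 4, if s i then nAnti i e else 0)) • (tpP e * stabElem s) := by
  rw [stabElem_def]
  have h := swap_mul (swap_mul (swap_mul (P_swap 0 (s 0) e) (P_swap 1 (s 1) e))
    (P_swap 2 (s 2) e)) (P_swap 3 (s 3) e)
  rw [h, Fin.sum_univ_four, pow_add, pow_add, pow_add]

lemma trace_stabElem_ne (s : Fin 4 → Bool) (hs : ∃ i, s i) :
    Matrix.trace (stabElem s) = 0 := by
  obtain ⟨j, k, hodd⟩ := syndrome_decide s hs
  set A := tpP (sngl j k) with hA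
  have hAA : A * A = 1 := tpP_sq _
  have hsw : stabElem s * A = -(A * stabElem s) := by
    rw [stabElem_swap, (Nat.not_even_iff_odd.mp hodd).neg_one_pow, neg_one_smul]
  have : Matrix.trace (stabElem s) = -Matrix.trace (stabElem s) := by
    calc Matrix.trace (stabElem s) = Matrix.trace (stabElem s * A * A) := by
          rw [mul_assoc, hAA, mul_one]
      _ = Matrix.trace (A * (stabElem s * A)) := by rw [Matrix.trace_mul_comm]
      _ = -Matrix.trace (A * A * stabElem s) := by
          rw [hsw, mul_neg, Matrix.trace_neg, mul_assoc]
      _ = -Matrix.trace (stabElem s) := by rw [hAA, one_mul]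
  have h0 : Matrix.trace (stabElem s) + Matrix.trace (stabElem s) = 0 := by
    nth_rewrite 2 [this]; exact add_neg_cancel _
  exact add_self_eq_zero.mp h0

lemma stabElem_anti (s : Fin 4 → Bool) (hs : ∃ i, s i) :
    ∃ A : Matrix (Fin 5 → Fin 2) (Fin 5 → Fin 2) ℂ,
      A * A = 1 ∧ stabElem s * A = -(A * stabElem s) := by
  obtain ⟨j, k, hodd⟩ := syndrome_decide s hs
  refine ⟨tpP (sngl j k), tpP_sq _, ?_⟩
  rw [stabElem_swap, (Nat.not_even_iff_odd.mp hodd).neg_one_pow, neg_one_smul]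

lemma stabElem_ne_pm_one (s : Fin 4 → Bool) (hs : ∃ i, s i) (c : ℂ) (hc : c ≠ 0) :
    stabElem s ≠ c • 1 := by
  obtain ⟨A, hAA, hsw⟩ := stabElem_anti s hs
  intro h
  rw [h, smul_mul_assoc, one_mul, mul_smul_comm, mul_one] at hsw
  have hA0 : A = 0 := by
    have h2 : (2 : ℂ) • (c • A) = 0 := by
      rw [two_smul ℂ]; nth_rewrite 1 [hsw]; exact neg_add_cancel (c • A)
    rcases smul_eq_zero.mp h2 with h' | h'
    · exact absurd h' two_ne_zero
    · rcases smul_eq_zero.mp h' with h'' | h''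
      · exact absurd h'' hc
      · exact h''
  rw [hA0, mul_zero] at hAA
  exact one_ne_zero hAA.symm

lemma one_ne_neg_one_mat :
    (1 : Matrix (Fin 5 → Fin 2) (Fin 5 → Fin 2) ℂ) ≠ -1 := by
  intro h
  have := congrArg Matrix.trace h
  rw [Matrix.trace_one, Matrix.trace_neg, Matrix.trace_one] at this
  norm_num at this

lemma stabElem_ne_negone (s : Fin 4 → Bool) : stabElem s ≠ -1 := by
  by_cases hs : ∃ i, s i
  · have := stabElem_ne_pm_one s hs (-1) (by norm_num)
    simpa using this
  · push_neg at hs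
    have : s = fun _ => false := funext fun i => by simpa using hs i
    rw [this, stabElem_zero]
    exact one_ne_neg_one_mat

lemma stabElem_inj : Function.Injective stabElem := by
  intro s t h
  have h1 : stabElem (fun i => xor (s i) (t i)) = 1 := by
    rw [← stabElem_mul, h, stabElem_inv]
  by_contra hne
  have hex : ∃ i, xor (s i) (t i) := by
    by_contra hc
    push_neg at hc
    apply hne
    funext i
    have := hc i
    cases hsi : s i <;> cases hti : t i <;> simp_all
  have := stabElem_ne_pm_one _ hex 1 one_ne_zero
  rw [one_smul] at this
  exact this h1

lemma sum_reindex (t : Fin 4 → Bool) :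
    ∑ s : Fin 4 → Bool, stabElem (fun i => xor (s i) (t i)) = ∑ s : Fin 4 → Bool, stabElem s := by
  apply Fintype.sum_bijective (fun s : Fin 4 → Bool => fun i => xor (s i) (t i))
  · apply Function.Involutive.bijective
    intro s; funext i; show ((s i ^^ t i) ^^ t i) = s i; cases s i <;> cases t i <;> rfl
  · intro s; rfl

lemma sum_reindex' (t : Fin 4 → Bool) :
    ∑ s : Fin 4 → Bool, stabElem (fun i => xor (t i) (s i)) = ∑ s : Fin 4 → Bool, stabElem s := by
  apply Fintype.sum_bijective (fun s : Fin 4 → Bool => fun i => xor (t i) (s i))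
  · apply Function.Involutive.bijective
    intro s; funext i; show (t i ^^ (t i ^^ s i)) = s i; cases s i <;> cases t i <;> rfl
  · intro s; rfl

lemma proj_idem : codeProj * codeProj = codeProj := by
  rw [codeProj, smul_mul_assoc, mul_smul_comm, Finset.sum_mul]
  have : ∀ s : Fin 4 → Bool, stabElem s * (∑ t : Fin 4 → Bool, stabElem t)
      = ∑ t : Fin 4 → Bool, stabElem t := by
    intro s
    rw [Finset.mul_sum]
    calc ∑ t : Fin 4 → Bool, stabElem s * stabElem t
        = ∑ t : Fin 4 → Bool, stabElem (fun i => xor (s i) (t i)) := by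
          exact Finset.sum_congr rfl fun t _ => stabElem_mul s t
      _ = ∑ t : Fin 4 → Bool, stabElem t := sum_reindex' s
  rw [Finset.sum_congr rfl fun s _ => this s, Finset.sum_const, smul_smul]
  have hcard : (Finset.univ : Finset (Fin 4 → Bool)).card = 16 := by decide
  rw [hcard, ← Nat.cast_smul_eq_nsmul ℂ, smul_smul]
  norm_num

lemma proj_herm : codeProjᴴ = codeProj := by
  rw [codeProj, Matrix.conjTranspose_smul, Matrix.conjTranspose_sum]
  congr 1
  · simp [Complex.ext_iff]
  · exact Finset.sum_congr rfl fun s _ => stabElem_conjT s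

lemma proj_trace : Matrix.trace codeProj = 2 := by
  rw [codeProj, Matrix.trace_smul, Matrix.trace_sum]
  rw [Finset.sum_eq_single (fun _ => false)]
  · rw [stabElem_zero, Matrix.trace_one]
    simp
    norm_num
  · intro s _ hne
    apply trace_stabElem_ne
    by_contra hc
    push_neg at hc
    exact hne (funext fun i => by simpa using hc i)
  · intro h; exact absurd (Finset.mem_univ _) h

lemma pauli_eq_one_iff (k : Fin 4) : pauli k = 1 ↔ k = 0 := by
  constructor
  · intro h
    fin_cases k
    · rfl
    all_goals
      exfalso
      rw [← Matrix.ext_iff] at h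
      have h11 := h 1 1
      norm_num [pauli, pX, pY, pZ, Matrix.one_apply, Complex.ext_iff] at h11
  · rintro rfl; rfl

lemma mem_pauli_exists (M : Matrix (Fin 2) (Fin 2) ℂ)
    (h : M ∈ ({1, pX, pY, pZ} : Set (Matrix (Fin 2) (Fin 2) ℂ))) : ∃ k : Fin 4, M = pauli k := by
  simp only [Set.mem_insert_iff, Set.mem_singleton_iff] at h
  rcases h with h | h | h | h
  exacts [⟨0, h⟩, ⟨1, h⟩, ⟨2, h⟩, ⟨3, h⟩]

lemma stabGen_as_elem (g : Fin 4) : stabGen g = stabElem (fun j => decide (j = g)) := by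
  fin_cases g <;> simp [stabElem]

lemma proj_absorb_left (g : Fin 4) : codeProj * stabGen g = codeProj := by
  rw [codeProj, smul_mul_assoc, Finset.sum_mul]
  refine congrArg (HSMul.hSMul (1 / 16 : ℂ)) ?_
  rw [stabGen_as_elem g]
  calc ∑ s : Fin 4 → Bool, stabElem s * stabElem (fun j => decide (j = g))
      = ∑ s : Fin 4 → Bool, stabElem (fun i => xor (s i) (decide (i = g))) :=
        Finset.sum_congr rfl fun s _ => stabElem_mul _ _
    _ = _ := sum_reindex _

lemma proj_absorb_right (g : Fin 4) : stabGen g * codeProj = codeProj := by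
  rw [codeProj, mul_smul_comm, Finset.mul_sum]
  congr 1
  rw [stabGen_as_elem g]
  calc ∑ s : Fin 4 → Bool, stabElem (fun j => decide (j = g)) * stabElem s
      = ∑ s : Fin 4 → Bool, stabElem (fun i => xor (decide (i = g)) (s i)) :=
        Finset.sum_congr rfl fun s _ => stabElem_mul _ _
    _ = _ := sum_reindex' _

lemma detected {E : Matrix (Fin 5 → Fin 2) (Fin 5 → Fin 2) ℂ} (g : Fin 4)
    (h : stabGen g * E = -(E * stabGen g)) : codeProj * E * codeProj = 0 := by
  have key : codeProj * E * codeProj = -(codeProj * E * codeProj) := by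
    calc codeProj * E * codeProj = codeProj * (stabGen g * E) * codeProj := by
          rw [← mul_assoc, proj_absorb_left]
      _ = -(codeProj * E * (stabGen g * codeProj)) := by
          rw [h]; simp only [mul_neg, neg_mul, mul_assoc]
      _ = -(codeProj * E * codeProj) := by rw [proj_absorb_right]
  have h0 : codeProj * E * codeProj + codeProj * E * codeProj = 0 := by
    nth_rewrite 2 [key]; exact add_neg_cancel _
  rw [← two_smul ℂ] at h0
  exact (smul_eq_zero.mp h0).resolve_left two_ne_zero

lemma part6 (f : Fin 5 → Matrix (Fin 2) (Fin 2) ℂ)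
    (hf : ∀ i, f i ∈ ({1, pX, pY, pZ} : Set (Matrix (Fin 2) (Fin 2) ℂ)))
    (hnz : ∃ i, f i ≠ 1) (hw : {i | f i ≠ 1}.ncard ≤ 2) :
    (∃ g : Fin 4, stabGen g * tp5 f = -(tp5 f * stabGen g)) ∧
      codeProj * tp5 f * codeProj = 0 := by
  choose e he using fun i => mem_pauli_exists (f i) (hf i)
  have hE : tp5 f = tpP e := congrArg tp5 (funext fun i => he i)
  have hiff : ∀ i, f i ≠ 1 ↔ e i ≠ 0 := by
    intro i
    rw [he i, ne_eq, pauli_eq_one_iff]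
  -- weight as finset card
  have hset : {i | f i ≠ 1} = ↑(Finset.univ.filter fun i => e i ≠ 0) := by
    ext i
    simp [hiff i]
  rw [hset, Set.ncard_coe_finset] at hw
  -- express e as dbl
  have hdbl : ∃ j1 j2 k1 k2, e = dbl j1 j2 k1 k2 := by
    set S := Finset.univ.filter fun i => e i ≠ 0 with hS
    have hmem : ∀ t, t ∉ S → e t = 0 := by
      intro t ht
      by_contra hc
      exact ht (Finset.mem_filter.mpr ⟨Finset.mem_univ t, hc⟩)
    interval_cases h : S.card
    · obtain h0 := Finset.card_eq_zero.mp h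
      refine ⟨0, 0, e 0, e 0, funext fun t => ?_⟩
      unfold dbl
      by_cases ht : t = (0 : Fin 5)
      · simp [ht]
      · simp only [ht, if_false]
        exact hmem t (by rw [h0]; exact Finset.notMem_empty t)
    · obtain ⟨a, ha⟩ := Finset.card_eq_one.mp h
      refine ⟨a, a, e a, e a, funext fun t => ?_⟩
      unfold dbl
      by_cases ht : t = a
      · simp [ht]
      · simp only [ht, if_false]
        refine hmem t ?_
        rw [ha]
        simpa using ht
    · obtain ⟨a, b, hab, hs2⟩ := Finset.card_eq_two.mp h
      refine ⟨a, b, e a, e b, funext fun t => ?_⟩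
      unfold dbl
      by_cases hta : t = a
      · simp [hta]
      · by_cases htb : t = b
        · simp [hta, htb, Ne.symm hab]
        · simp only [hta, htb, if_false]
          refine hmem t ?_
          rw [hs2]
          simp [hta, htb]
  obtain ⟨j1, j2, k1, k2, hed⟩ := hdbl
  have hnz' : ∃ i, dbl j1 j2 k1 k2 i ≠ 0 := by
    obtain ⟨i, hi⟩ := hnz
    exact ⟨i, hed ▸ (hiff i).mp hi⟩
  obtain ⟨g, hg⟩ := detect_decide j1 j2 k1 k2 hnz'
  have hanti : stabGen g * tp5 f = -(tp5 f * stabGen g) := by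
    rw [hE, hed, gen_swap, (Nat.not_even_iff_odd.mp hg).neg_one_pow, neg_one_smul]
  exact ⟨⟨g, hanti⟩, detected g hanti⟩

/-- The 5-qubit perfect code: the stabilizer generators pairwise commute
and generate an abelian group of order 16 not containing `−I`; `Π` is an orthogonal
projection of rank 2 (a 2-dimensional codespace); and every nontrivial Pauli of weight
at most 2 anticommutes with some generator and is detected (`Π E Π = 0`); in
particular all single-qubit Pauli errors are detected. -/
theorem five_qubit_code_detects_single_qubit_errors :
    (∀ i j : Fin 4, stabGen i * stabGen j = stabGen j * stabGen i) ∧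
    (∀ s : Fin 4 → Bool, stabElem s ≠ -1) ∧
    (Function.Injective stabElem) ∧
    (codeProj * codeProj = codeProj ∧ codeProjᴴ = codeProj) ∧
    (Matrix.trace codeProj = 2) ∧
    (∀ f : Fin 5 → Matrix (Fin 2) (Fin 2) ℂ,
      (∀ i, f i ∈ ({1, pX, pY, pZ} : Set (Matrix (Fin 2) (Fin 2) ℂ))) →
      (∃ i, f i ≠ 1) → {i | f i ≠ 1}.ncard ≤ 2 →
      (∃ g : Fin 4, stabGen g * tp5 f = -(tp5 f * stabGen g)) ∧
        codeProj * tp5 f * codeProj = 0) := by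
  refine ⟨gen_comm, stabElem_ne_negone, stabElem_inj, ⟨proj_idem, proj_herm⟩, proj_trace,
    part6⟩
end
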